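/- Let G be an undirected graph, x a vertex, and ν, k positive numbers with 2νk + ν + 1 ≤ 2m where m = |E(G)|. Construct the capacitated graph G' on vertex set {s} ∪ V ∪ {t} where each edge of G gets capacity 2ν, each vertex u is joined to t by an edge of capacity deg_G(u), and s is joined to x by an edge of capacity 2νk + ν + 1. If there exists a vertex set S ⊆ V with x ∈ S, vol(S) ≤ ν, and |E(S, V−S)| ≤ k, then the value of the maximum s-t flow in G' is at most 2νk + ν. -/
import Mathlib


open Finset

inductive AugV (V : Type) where
  | s : AugV V
  | t : AugV V
  | orig : V → AugV V
deriving DecidableEq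

instance {V : Type} [Fintype V] [DecidableEq V] : Fintype (AugV V) :=
  Fintype.ofSurjective
    (fun o : Option (Option V) =>
      match o with
      | none => AugV.s
      | some none => AugV.t
      | some (some v) => AugV.orig v)
    (by rintro (_ | _ | v)
        · exact ⟨none, rfl⟩
        · exact ⟨some none, rfl⟩
        · exact ⟨some (some v), rfl⟩)

variable {V : Type} [Fintype V] [DecidableEq V]

/-- A flow on the augmented graph with capacity function `c`,
source `s` and sink `t`. -/
structure AugFlow (c : AugV V → AugV V → ℝ) where
  f : AugV V → AugV V → ℝ
  skew : ∀ u v, f u v = - f v u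
  le_cap : ∀ u v, f u v ≤ c u v
  conserve : ∀ v : AugV V, v ≠ AugV.s → v ≠ AugV.t → ∑ u : AugV V, f u v = 0

/-- The value of a flow: total flow leaving the source `s`. -/
def AugFlow.value {c : AugV V → AugV V → ℝ} (fl : AugFlow c) : ℝ :=
  ∑ v : AugV V, fl.f AugV.s v

/-- The capacities of the augmented graph `G'`: each edge of `G` gets capacity
`2ν`, each vertex `u` is joined to `t` with capacity `deg_G(u)`, and `s` is
joined to `x` with capacity `2νk + ν + 1`. -/
def augCap (G : SimpleGraph V) [DecidableRel G.Adj] (x : V) (ν k : ℝ) :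
    AugV V → AugV V → ℝ
  | AugV.orig u, AugV.orig v => if G.Adj u v then 2 * ν else 0
  | AugV.orig u, AugV.t => (G.degree u : ℝ)
  | AugV.s, AugV.orig v => if v = x then 2 * ν * k + ν + 1 else 0
  | _, _ => 0

/-- Let `G` be an undirected graph with `m` edges, `x` a vertex, and
`ν, k > 0` with `2νk + ν + 1 ≤ 2m`. If there is a set `S ∋ x` with
`vol(S) ≤ ν` and `|E(S, V−S)| ≤ k`, then the maximum `s`-`t` flow value `F`
in the augmented graph `G'` satisfies `F ≤ 2νk + ν`. -/
theorem stmt1 (G : SimpleGraph V) [DecidableRel G.Adj] (x : V) (ν k : ℝ)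
    (hν : 0 < ν) (hk : 0 < k)
    (hm : 2 * ν * k + ν + 1 ≤ 2 * (G.edgeFinset.card : ℝ))
    (S : Finset V) (hx : x ∈ S)
    (hvol : (∑ u ∈ S, (G.degree u : ℝ)) ≤ ν)
    (hcross : (((S ×ˢ Sᶜ).filter fun p => G.Adj p.1 p.2).card : ℝ) ≤ k)
    (F : ℝ)
    (hF : IsGreatest {r : ℝ | ∃ fl : AugFlow (augCap G x ν k), fl.value = r} F) :
    F ≤ 2 * ν * k + ν := by
  obtain ⟨fl, rfl⟩ := hF.1
  set A : Finset (AugV V) := insert AugV.s (S.image AugV.orig) with hA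
  have horig_inj : Function.Injective (AugV.orig : V → AugV V) := by
    intro a b h; injection h
  -- value equals sum of row-sums over A
  have hval : fl.value = ∑ u ∈ A, ∑ v : AugV V, fl.f u v := by
    rw [hA, Finset.sum_insert (by simp)]
    have hz : ∑ u ∈ S.image AugV.orig, ∑ v : AugV V, fl.f u v = 0 := by
      apply Finset.sum_eq_zero
      intro u hu
      obtain ⟨a, _, rfl⟩ := Finset.mem_image.mp hu
      have h1 : ∑ v : AugV V, fl.f v (AugV.orig a) = 0 :=
        fl.conserve _ (by simp) (by simp)
      calc ∑ v : AugV V, fl.f (AugV.orig a) v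
          = ∑ v : AugV V, -fl.f v (AugV.orig a) :=
            Finset.sum_congr rfl fun v _ => fl.skew _ _
        _ = -∑ v : AugV V, fl.f v (AugV.orig a) := by simp
        _ = 0 := by rw [h1, neg_zero]
    rw [hz, add_zero]; rfl
  have hcancel : ∑ u ∈ A, ∑ v ∈ A, fl.f u v = 0 := by
    have h : ∑ u ∈ A, ∑ v ∈ A, fl.f u v = - ∑ u ∈ A, ∑ v ∈ A, fl.f u v := by
      calc ∑ u ∈ A, ∑ v ∈ A, fl.f u v
          = ∑ u ∈ A, ∑ v ∈ A, fl.f v u := Finset.sum_comm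
        _ = ∑ u ∈ A, ∑ v ∈ A, -fl.f u v :=
            Finset.sum_congr rfl fun u _ => Finset.sum_congr rfl fun v _ => fl.skew v u
        _ = - ∑ u ∈ A, ∑ v ∈ A, fl.f u v := by simp
    linarith
  have hsplit : fl.value = ∑ u ∈ A, ∑ v ∈ Aᶜ, fl.f u v := by
    rw [hval]
    have hh : ∀ u, ∑ v : AugV V, fl.f u v = ∑ v ∈ A, fl.f u v + ∑ v ∈ Aᶜ, fl.f u v :=
      fun u => (Finset.sum_add_sum_compl A _).symm
    simp_rw [hh, Finset.sum_add_distrib, hcancel, zero_add]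
  have hle : fl.value ≤ ∑ u ∈ A, ∑ v ∈ Aᶜ, augCap G x ν k u v := by
    rw [hsplit]
    exact Finset.sum_le_sum fun u _ => Finset.sum_le_sum fun v _ => fl.le_cap u v
  have hAc : Aᶜ = insert AugV.t (Sᶜ.image AugV.orig) := by
    ext v
    rcases v with _ | _ | a <;>
      simp [hA, Finset.mem_compl]
  have hcap : ∑ u ∈ A, ∑ v ∈ Aᶜ, augCap G x ν k u v ≤ 2 * ν * k + ν := by
    rw [hA, hAc, Finset.sum_insert (by simp)]
    have h1 : ∑ v ∈ insert AugV.t (Sᶜ.image AugV.orig), augCap G x ν k AugV.s v = 0 := by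
      apply Finset.sum_eq_zero
      intro v hv
      rcases Finset.mem_insert.mp hv with rfl | hv
      · rfl
      · obtain ⟨b, hb, rfl⟩ := Finset.mem_image.mp hv
        have hbx : b ≠ x := fun h => (Finset.mem_compl.mp hb) (h ▸ hx)
        simp [augCap, hbx]
    rw [h1, zero_add, Finset.sum_image (fun a _ b _ h => horig_inj h)]
    have h2 : ∀ a ∈ S, ∑ v ∈ insert AugV.t (Sᶜ.image AugV.orig), augCap G x ν k (AugV.orig a) v
        = (G.degree a : ℝ) + ∑ b ∈ Sᶜ, (if G.Adj a b then 2 * ν else 0) := by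
      intro a _
      rw [Finset.sum_insert (by simp), Finset.sum_image (fun a _ b _ h => horig_inj h)]
      rfl
    rw [Finset.sum_congr rfl h2, Finset.sum_add_distrib]
    have h3 : ∑ a ∈ S, ∑ b ∈ Sᶜ, (if G.Adj a b then 2 * ν else 0)
        = (((S ×ˢ Sᶜ).filter fun p => G.Adj p.1 p.2).card : ℝ) * (2 * ν) := by
      rw [← Finset.sum_product', ← Finset.sum_filter, Finset.sum_const, nsmul_eq_mul]
    rw [h3]
    nlinarith [hvol, hcross, hν.le]
  have := hle.trans hcap
  linarith
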